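/- With ρ_min = (Δ_T(q−ε)/(Δ_H(p+ε)))^{1/(Δ_H+Δ_T)}, one has 1 − ρ_min^{Δ_H} ≥ (Δ_H·(p+ε) − Δ_T·(q−ε)) / (2·(Δ_H+Δ_T)·(p+ε)). -/

import Mathlib

/-- `1 − ρ_min^{Δ_H} ≥ (Δ_H·(p+ε) − Δ_T·(q−ε)) / (2·(Δ_H+Δ_T)·(p+ε))`. -/
theorem one_sub_rhoMin_pow_ge
    (ε p : ℝ) (hε : ε ∈ Set.Ioo (0:ℝ) (1/2)) (hp : p ∈ Set.Ioo ε (1 - ε))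
    (q ΔH ΔT ρmin : ℝ) (hq : q = 1 - p)
    (hΔH : ΔH = Real.log ((p + ε) / (p - ε)))
    (hΔT : ΔT = Real.log ((q + ε) / (q - ε)))
    (hρmin : ρmin = (ΔT * (q - ε) / (ΔH * (p + ε))) ^ (1 / (ΔH + ΔT))) :
    (ΔH * (p + ε) - ΔT * (q - ε)) / (2 * (ΔH + ΔT) * (p + ε))
      ≤ 1 - ρmin ^ ΔH := by
  obtain ⟨hε0, hε2⟩ := hε
  obtain ⟨hpl, hpr⟩ := hp
  have hpe : 0 < p + ε := by linarith
  have hpm : 0 < p - ε := by linarith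
  have hqe : 0 < q + ε := by rw [hq]; linarith
  have hqm : 0 < q - ε := by rw [hq]; linarith
  -- positivity of ΔH, ΔT
  have hΔHpos : 0 < ΔH := by
    rw [hΔH]
    apply Real.log_pos
    rw [lt_div_iff₀ hpm]; linarith
  have hΔTpos : 0 < ΔT := by
    rw [hΔT]
    apply Real.log_pos
    rw [lt_div_iff₀ hqm]; linarith
  set A := ΔH * (p + ε) with hA
  set B := ΔT * (q - ε) with hB
  have hApos : 0 < A := mul_pos hΔHpos hpe
  have hBpos : 0 < B := mul_pos hΔTpos hqm
  -- B ≤ (p+ε) - (p-ε) = 2ε, since log x ≤ x - 1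
  have hB2ε : B ≤ 2 * ε := by
    have hlog : Real.log ((q + ε) / (q - ε)) ≤ (q + ε) / (q - ε) - 1 :=
      Real.log_le_sub_one_of_pos (div_pos hqe hqm)
    have : B ≤ ((q + ε) / (q - ε) - 1) * (q - ε) := by
      rw [hB, hΔT]
      exact mul_le_mul_of_nonneg_right hlog hqm.le
    calc B ≤ ((q + ε) / (q - ε) - 1) * (q - ε) := this
      _ = (q + ε) - (q - ε) := by field_simp
      _ = 2 * ε := by ring
  -- A > 2ε, since log x > 1 - 1/x for x ≠ 1
  have hA2ε : 2 * ε < A := by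
    have hne : (p - ε) / (p + ε) ≠ 1 := by
      intro h
      have := (div_eq_one_iff_eq (ne_of_gt hpe)).mp h
      linarith
    have hlog : Real.log ((p - ε) / (p + ε)) < (p - ε) / (p + ε) - 1 :=
      Real.log_lt_sub_one_of_pos (div_pos hpm hpe) hne
    have hinv : Real.log ((p - ε) / (p + ε)) = - ΔH := by
      rw [hΔH, ← Real.log_inv]
      congr 1
      field_simp
    rw [hinv] at hlog
    have : 1 - (p - ε) / (p + ε) < ΔH := by linarith
    have h2 : (1 - (p - ε) / (p + ε)) * (p + ε) < ΔH * (p + ε) :=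
      mul_lt_mul_of_pos_right this hpe
    have h3 : (1 - (p - ε) / (p + ε)) * (p + ε) = 2 * ε := by
      field_simp; ring
    rw [h3] at h2
    exact h2
  have hBA : B < A := lt_of_le_of_lt hB2ε hA2ε
  set S := ΔH + ΔT with hS
  have hSpos : 0 < S := by positivity
  set x := B / A with hx
  have hx0 : 0 < x := div_pos hBpos hApos
  have hx1 : x < 1 := (div_lt_one hApos).mpr hBA
  set t := ΔH / S with ht
  have ht0 : 0 < t := div_pos hΔHpos hSpos
  have ht1 : t ≤ 1 := by
    rw [ht, div_le_one hSpos, hS]; linarith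
  -- ρmin ^ ΔH = x ^ t
  have hpow : ρmin ^ ΔH = x ^ t := by
    rw [hρmin, ← Real.rpow_mul hx0.le]
    congr 1
    rw [ht]
    field_simp
  -- Bernoulli: x ^ t ≤ 1 + t * (x - 1)
  have hbern : x ^ t ≤ 1 + t * (x - 1) := by
    have := rpow_one_add_le_one_add_mul_self (s := x - 1) (by linarith) ht0.le ht1
    simpa using this
  have key : t * (1 - x) = (A - B) / (S * (p + ε)) := by
    rw [ht, hx, hA]
    field_simp
  rw [hpow]
  calc (A - B) / (2 * S * (p + ε)) ≤ (A - B) / (S * (p + ε)) := by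
        apply div_le_div_of_nonneg_left (by linarith) (by positivity) (by nlinarith)
    _ = t * (1 - x) := key.symm
    _ ≤ 1 - x ^ t := by linarith
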